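/- For constants c₁,…,c₆ with ξ(x,y) = c₁x + c₂y + c₃ and η(x,y) = c₄x + c₅y + c₆ satisfying the linearized symmetry condition η_x + (η_y − ξ_x)ω − ξ_y·ω² = ξ·ω_x + η·ω_y for the Schottky ω(x,y) = β/(p+rβ) (b > c > 0, p > 0, r > 0), it follows that c₁ = c₂ = c₄ = c₅ = 0 and c₃ = r·c₆; i.e., the only affine symmetries are the translations (ξ,η) = (r·c₆, c₆). -/

import Mathlib

set_option maxRecDepth 4000

open Filter Real Topology

lemma texp {a : ℝ} (ha : 0 < a) : Tendsto (fun x : ℝ => Real.exp (-a*x)) atTop (𝓝 0) := by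
  refine Real.tendsto_exp_atBot.comp ?_
  exact (tendsto_const_mul_atBot_of_neg (by linarith)).mpr tendsto_id

lemma txexp {a : ℝ} (ha : 0 < a) : Tendsto (fun x : ℝ => x * Real.exp (-a*x)) atTop (𝓝 0) := by
  have h1 : Tendsto (fun x : ℝ => (a*x) ^ 1 * Real.exp (-(a*x))) atTop (𝓝 0) :=
    (Real.tendsto_pow_mul_exp_neg_atTop_nhds_zero 1).comp
      ((tendsto_const_mul_atTop_of_pos ha).mpr tendsto_id)
  have h2 := h1.const_mul (1/a)
  rw [mul_zero] at h2
  refine h2.congr fun x => ?_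
  field_simp

theorem lsc_forces_translation_ansatz2
    (b c p r : ℝ) (hbc : c < b) (hc : 0 < c) (hp : 0 < p) (hr : 0 < r)
    (β ω : ℝ → ℝ → ℝ)
    (hβ : ∀ x y, β x y = ((b - c) * Real.exp (-b * (x - y * r)) + c) * Real.exp (c * (x - y * r)))
    (hω : ∀ x y, ω x y = β x y / (p + r * β x y))
    (c₁ c₂ c₃ c₄ c₅ c₆ : ℝ)
    (ξ η : ℝ → ℝ → ℝ)
    (hξ : ∀ x y, ξ x y = c₁ * x + c₂ * y + c₃)
    (hη : ∀ x y, η x y = c₄ * x + c₅ * y + c₆)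
    (hlsc : ∀ x y,
      deriv (fun t => η t y) x
        + (deriv (fun t => η x t) y - deriv (fun t => ξ t y) x) * ω x y
        - deriv (fun t => ξ x t) y * (ω x y) ^ 2
      = ξ x y * deriv (fun t => ω t y) x + η x y * deriv (fun t => ω x t) y) :
    c₁ = 0 ∧ c₂ = 0 ∧ c₄ = 0 ∧ c₅ = 0 ∧ c₃ = r * c₆ := by
  have hb : 0 < b := lt_trans hc hbc
  -- basic functions
  set B : ℝ → ℝ := fun u => ((b - c) * Real.exp (-b * u) + c) * Real.exp (c * u) with hB
  set Bd : ℝ → ℝ := fun u => ((b - c) * (-b) * Real.exp (-b * u)) * Real.exp (c * u)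
      + ((b - c) * Real.exp (-b * u) + c) * (c * Real.exp (c * u)) with hBd
  have hBpos : ∀ u, 0 < B u := by
    intro u
    have hbc' : 0 < b - c := by linarith
    have h1 : 0 < (b - c) * Real.exp (-b * u) + c :=
      add_pos (mul_pos hbc' (Real.exp_pos _)) hc
    exact mul_pos h1 (Real.exp_pos _)
  have hden : ∀ u, (0:ℝ) < p + r * B u := by
    intro u; have := hBpos u; positivity
  set W : ℝ → ℝ := fun u => B u / (p + r * B u) with hW
  have hBder : ∀ u, HasDerivAt B (Bd u) u := by
    intro u
    have h1 : HasDerivAt (fun u : ℝ => -b * u) (-b) u := by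
      simpa using (hasDerivAt_id u).const_mul (-b)
    have h2 : HasDerivAt (fun u : ℝ => Real.exp (-b * u)) (Real.exp (-b * u) * (-b)) u := h1.exp
    have h3 : HasDerivAt (fun u : ℝ => (b - c) * Real.exp (-b * u) + c)
        ((b - c) * (Real.exp (-b * u) * (-b))) u := (h2.const_mul (b - c)).add_const c
    have h4 : HasDerivAt (fun u : ℝ => c * u) c u := by
      simpa using (hasDerivAt_id u).const_mul c
    have h5 : HasDerivAt (fun u : ℝ => Real.exp (c * u)) (Real.exp (c * u) * c) u := h4.exp
    have := h3.mul h5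
    refine this.congr_deriv ?_
    simp only [hBd]; ring
  have hWder : ∀ u, HasDerivAt W (p * Bd u / (p + r * B u) ^ 2) u := by
    intro u
    have hgd : HasDerivAt (fun u : ℝ => p + r * B u) (r * Bd u) u :=
      ((hBder u).const_mul r).const_add p
    have hne := ne_of_gt (hden u)
    have := (hBder u).div hgd hne
    refine this.congr_deriv ?_
    rw [div_eq_div_iff (pow_ne_zero 2 hne) (pow_ne_zero 2 hne)]
    ring
  -- pointwise form of ω along slices
  have hω0 : (fun t => ω t 0) = W := by
    funext t
    rw [hω, hβ]
    simp [hW, hB]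
  have hωy : ∀ x : ℝ, (fun t => ω x t) = fun t => W (x - t * r) := by
    intro x
    funext t
    rw [hω, hβ]
  -- derivatives of affine functions
  have haff : ∀ (a₁ a₂ a₃ x : ℝ), deriv (fun t => a₁ * t + a₂ + a₃) x = a₁ := by
    intro a₁ a₂ a₃ x
    have : HasDerivAt (fun t : ℝ => a₁ * t + a₂ + a₃) (a₁ * 1) x :=
      (((hasDerivAt_id x).const_mul a₁).add_const a₂).add_const a₃
    simpa using this.deriv
  -- the main pointwise identity with derivatives computed, at y = 0
  have hmain : ∀ x : ℝ,
      c₄ + (c₅ - c₁) * W x - c₂ * (W x) ^ 2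
        = (c₁ * x + c₂ * 0 + c₃) * (p * Bd x / (p + r * B x) ^ 2)
          + (c₄ * x + c₅ * 0 + c₆) * (p * Bd x / (p + r * B x) ^ 2 * (-(1 * r))) := by
    intro x
    have h := hlsc x 0
    have e1 : deriv (fun t => η t 0) x = c₄ := by
      have : (fun t => η t 0) = fun t => c₄ * t + c₅ * 0 + c₆ := funext fun t => hη t 0
      rw [this, haff]
    have e2 : deriv (fun t => η x t) 0 = c₅ := by
      have : (fun t => η x t) = fun t => c₅ * t + c₄ * x + c₆ := by
        funext t; rw [hη]; ring
      rw [this, haff]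
    have e3 : deriv (fun t => ξ t 0) x = c₁ := by
      have : (fun t => ξ t 0) = fun t => c₁ * t + c₂ * 0 + c₃ := funext fun t => hξ t 0
      rw [this, haff]
    have e4 : deriv (fun t => ξ x t) 0 = c₂ := by
      have : (fun t => ξ x t) = fun t => c₂ * t + c₁ * x + c₃ := by
        funext t; rw [hξ]; ring
      rw [this, haff]
    have e5 : deriv (fun t => ω t 0) x = p * Bd x / (p + r * B x) ^ 2 := by
      rw [hω0]; exact (hWder x).deriv
    have e6 : deriv (fun t => ω x t) 0 = p * Bd x / (p + r * B x) ^ 2 * (-(1 * r)) := by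
      rw [hωy x]
      have hg : HasDerivAt (fun t : ℝ => x - t * r) (-(1 * r)) 0 :=
        ((hasDerivAt_id (0:ℝ)).mul_const r).const_sub x
      have hx0 : x - (0:ℝ) * r = x := by ring
      have hcomp := HasDerivAt.comp (0:ℝ) (hWder (x - 0 * r)) hg
      rw [hx0] at hcomp
      exact hcomp.deriv
    have e7 : ω x 0 = W x := by rw [← hω0]
    rw [e1, e2, e3, e4, e5, e6, e7, hξ, hη] at h
    exact h
  have hbc' : (0:ℝ) < b - c := by linarith
  -- exponential relations
  have hPR : ∀ x : ℝ, Real.exp (c*x) * Real.exp (-c*x) = 1 := by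
    intro x
    rw [← Real.exp_add]
    norm_num
  have hQP : ∀ x : ℝ, Real.exp (-b*x) * Real.exp (c*x) = Real.exp ((c-b)*x) := by
    intro x
    rw [← Real.exp_add]
    congr 1
    ring
  -- polynomial identity in B, Bd
  have hKeyB : ∀ x : ℝ, c₄*p^2 + p*((2*r*c₄+c₅-c₁)*B x - ((c₁-r*c₄)*x+(c₃-r*c₆))*Bd x) + (r^2*c₄+r*(c₅-c₁)-c₂)*(B x)^2 = 0 := by
    intro x
    have h := hmain x
    have hne : (p + r*B x) ≠ 0 := ne_of_gt (hden x)
    have hw1 : W x * (p + r*B x) = B x := by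
      rw [hW]; exact div_mul_cancel₀ _ hne
    have hw2 : (p*Bd x/(p+r*B x)^2) * ((p+r*B x)^2) = p*Bd x :=
      div_mul_cancel₀ _ (pow_ne_zero 2 hne)
    linear_combination (p + r*B x)^2 * h
      - ((c₅-c₁)*(p+r*B x) - c₂*(W x*(p+r*B x) + B x))*hw1
      + ((c₁*x+c₂*0+c₃) + (c₄*x+c₅*0+c₆)*(-(1*r)))*hw2
  -- key exponential identity
  have hKey : ∀ x : ℝ,
      c₄*p^2
      + p*((b-c)*Real.exp (-b*x)*((2*r*c₄+c₅-c₁) - (c-b)*((c₁-r*c₄)*x+(c₃-r*c₆))) + c*((2*r*c₄+c₅-c₁) - c*((c₁-r*c₄)*x+(c₃-r*c₆)))) * Real.exp (c*x)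
      + (r^2*c₄+r*(c₅-c₁)-c₂)*(((b-c)*Real.exp (-b*x) + c) * Real.exp (c*x))^2 = 0 := by
    intro x
    have h2 := hKeyB x
    simp only [hB, hBd] at h2
    linear_combination h2
  -- basic limits
  have tb : Tendsto (fun x : ℝ => Real.exp (-b*x)) atTop (𝓝 0) := texp hb
  have tc : Tendsto (fun x : ℝ => Real.exp (-c*x)) atTop (𝓝 0) := texp hc
  have txb : Tendsto (fun x : ℝ => x * Real.exp (-b*x)) atTop (𝓝 0) := txexp hb
  have txc : Tendsto (fun x : ℝ => x * Real.exp (-c*x)) atTop (𝓝 0) := txexp hc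
  -- Step 1: K = 0
  have hKey2 : ∀ x : ℝ,
      c₄*p^2*(Real.exp (-c*x)*Real.exp (-c*x))
      + p*(b-c)*((2*r*c₄+c₅-c₁) - (c-b)*(c₃-r*c₆))*(Real.exp (-b*x)*Real.exp (-c*x))
      - p*(b-c)*(c-b)*(c₁-r*c₄)*((x*Real.exp (-c*x))*Real.exp (-b*x))
      + p*c*((2*r*c₄+c₅-c₁) - c*(c₃-r*c₆))*Real.exp (-c*x)
      - p*c^2*(c₁-r*c₄)*(x*Real.exp (-c*x))
      + (r^2*c₄+r*(c₅-c₁)-c₂)*((b-c)*Real.exp (-b*x) + c)^2 = 0 := by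
    intro x
    linear_combination (Real.exp (-c*x))^2 * hKey x
      - (p*((b-c)*Real.exp (-b*x)*((2*r*c₄+c₅-c₁) - (c-b)*((c₁-r*c₄)*x+(c₃-r*c₆))) + c*((2*r*c₄+c₅-c₁) - c*((c₁-r*c₄)*x+(c₃-r*c₆))))*Real.exp (-c*x)
          + (r^2*c₄+r*(c₅-c₁)-c₂)*((b-c)*Real.exp (-b*x) + c)^2*(Real.exp (c*x)*Real.exp (-c*x) + 1)) * hPR x
  have hKlim : Tendsto (fun x : ℝ =>
      c₄*p^2*(Real.exp (-c*x)*Real.exp (-c*x))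
      + p*(b-c)*((2*r*c₄+c₅-c₁) - (c-b)*(c₃-r*c₆))*(Real.exp (-b*x)*Real.exp (-c*x))
      - p*(b-c)*(c-b)*(c₁-r*c₄)*((x*Real.exp (-c*x))*Real.exp (-b*x))
      + p*c*((2*r*c₄+c₅-c₁) - c*(c₃-r*c₆))*Real.exp (-c*x)
      - p*c^2*(c₁-r*c₄)*(x*Real.exp (-c*x))
      + (r^2*c₄+r*(c₅-c₁)-c₂)*((b-c)*Real.exp (-b*x) + c)^2) atTop (𝓝 ((r^2*c₄+r*(c₅-c₁)-c₂)*c^2)) := by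
    have h1 := (tc.mul tc).const_mul (c₄*p^2)
    have h2 := (tb.mul tc).const_mul (p*(b-c)*((2*r*c₄+c₅-c₁) - (c-b)*(c₃-r*c₆)))
    have h3 := (txc.mul tb).const_mul (p*(b-c)*(c-b)*(c₁-r*c₄))
    have h4 := tc.const_mul (p*c*((2*r*c₄+c₅-c₁) - c*(c₃-r*c₆)))
    have h5 := txc.const_mul (p*c^2*(c₁-r*c₄))
    have h6 : Tendsto (fun x : ℝ => (r^2*c₄+r*(c₅-c₁)-c₂)*((b-c)*Real.exp (-b*x) + c)^2) atTop (𝓝 ((r^2*c₄+r*(c₅-c₁)-c₂)*c^2)) := by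
      have h7 : Tendsto (fun x : ℝ => (b-c)*Real.exp (-b*x) + c) atTop (𝓝 c) := by
        simpa using (tb.const_mul (b-c)).add_const c
      simpa using (h7.pow 2).const_mul (r^2*c₄+r*(c₅-c₁)-c₂)
    have := ((((h1.add h2).sub h3).add h4).sub h5).add h6
    simpa using this
  have hK : (r^2*c₄+r*(c₅-c₁)-c₂) = 0 := by
    have h0 : Tendsto (fun _ : ℝ => (0:ℝ)) atTop (𝓝 ((r^2*c₄+r*(c₅-c₁)-c₂)*c^2)) :=
      hKlim.congr fun x => hKey2 x
    have := tendsto_nhds_unique h0 tendsto_const_nhds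
    exact (mul_eq_zero.mp this).resolve_right (by positivity)
  -- Step 2: D = 0 and the constant relation
  have hF3 : ∀ x : ℝ,
      c₄*p^2*Real.exp (-c*x) + p*((b-c)*Real.exp (-b*x)*((2*r*c₄+c₅-c₁) - (c-b)*((c₁-r*c₄)*x+(c₃-r*c₆))) + c*((2*r*c₄+c₅-c₁) - c*((c₁-r*c₄)*x+(c₃-r*c₆)))) = 0 := by
    intro x
    linear_combination (Real.exp (-c*x)) * hKey x
      - (p*((b-c)*Real.exp (-b*x)*((2*r*c₄+c₅-c₁) - (c-b)*((c₁-r*c₄)*x+(c₃-r*c₆))) + c*((2*r*c₄+c₅-c₁) - c*((c₁-r*c₄)*x+(c₃-r*c₆))))) * hPR x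
      - ((((b-c)*Real.exp (-b*x) + c)*Real.exp (c*x))^2*Real.exp (-c*x)) * hK
  set eps : ℝ → ℝ := fun x => c₄*p^2*Real.exp (-c*x)
      + p*(b-c)*Real.exp (-b*x)*((2*r*c₄+c₅-c₁) - (c-b)*((c₁-r*c₄)*x+(c₃-r*c₆))) with heps
  have heps0 : Tendsto eps atTop (𝓝 0) := by
    have h1 := tc.const_mul (c₄*p^2)
    have h2 := tb.const_mul (p*(b-c)*((2*r*c₄+c₅-c₁) - (c-b)*(c₃-r*c₆)))
    have h3 := txb.const_mul (p*(b-c)*(c-b)*(c₁-r*c₄))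
    have h4 := (h1.add h2).sub h3
    have h5 : Tendsto (fun x : ℝ => c₄*p^2*Real.exp (-c*x)
        + p*(b-c)*((2*r*c₄+c₅-c₁) - (c-b)*(c₃-r*c₆))*Real.exp (-b*x) - p*(b-c)*(c-b)*(c₁-r*c₄)*(x*Real.exp (-b*x))) atTop (𝓝 0) := by
      simpa using h4
    exact h5.congr fun x => by simp only [heps]; ring
  have heq : ∀ x : ℝ, eps x = p*c^2*(c₁-r*c₄)*x + (p*c^2*(c₃-r*c₆) - p*c*(2*r*c₄+c₅-c₁)) := by
    intro x
    simp only [heps]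
    linear_combination hF3 x
  have hshift : Tendsto (fun x : ℝ => eps (x+1) - eps x) atTop (𝓝 0) := by
    have hcomp : Tendsto (fun x : ℝ => eps (x+1)) atTop (𝓝 0) :=
      heps0.comp (tendsto_atTop_add_const_right (atTop : Filter ℝ) (1:ℝ) tendsto_id)
    simpa using hcomp.sub heps0
  have hDz : p*c^2*(c₁-r*c₄) = 0 := by
    refine tendsto_nhds_unique tendsto_const_nhds (hshift.congr fun x => ?_)
    rw [heq, heq]
    ring
  have hD : c₁ - r*c₄ = 0 :=
    (mul_eq_zero.mp hDz).resolve_left (by positivity)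
  have hA0 : p*c^2*(c₃-r*c₆) - p*c*(2*r*c₄+c₅-c₁) = 0 := by
    have h2 : Tendsto (fun _ : ℝ => p*c^2*(c₃-r*c₆) - p*c*(2*r*c₄+c₅-c₁)) atTop (𝓝 0) :=
      heps0.congr fun x => by rw [heq x, hD]; ring
    exact tendsto_nhds_unique tendsto_const_nhds h2
  -- Step 3: c₄ = 0 and remaining relations
  have hF3' : ∀ x : ℝ, c₄*p^2*Real.exp (-c*x) + p*(b-c)*Real.exp (-b*x)*((2*r*c₄+c₅-c₁) - (c-b)*(c₃-r*c₆)) = 0 := by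
    intro x
    linear_combination hF3 x + (p*(b-c)*Real.exp (-b*x)*(c-b)*x + p*c^2*x)*hD + hA0
  have hF4 : ∀ x : ℝ,
      c₄*p^2 + p*(b-c)*((2*r*c₄+c₅-c₁) - (c-b)*(c₃-r*c₆))*Real.exp ((c-b)*x) = 0 := by
    intro x
    linear_combination (Real.exp (c*x)) * hF3' x - c₄*p^2 * hPR x - (p*(b-c)*((2*r*c₄+c₅-c₁) - (c-b)*(c₃-r*c₆))) * hQP x
  have te : Tendsto (fun x : ℝ => Real.exp ((c-b)*x)) atTop (𝓝 0) := by
    refine (texp hbc').congr fun x => ?_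
    congr 1
    ring
  have hc4 : c₄ = 0 := by
    have hl : Tendsto (fun x : ℝ =>
        c₄*p^2 + p*(b-c)*((2*r*c₄+c₅-c₁) - (c-b)*(c₃-r*c₆))*Real.exp ((c-b)*x)) atTop (𝓝 (c₄*p^2)) := by
      simpa using tendsto_const_nhds.add ((te.const_mul (p*(b-c)*((2*r*c₄+c₅-c₁) - (c-b)*(c₃-r*c₆)))))
    have h0 : Tendsto (fun _ : ℝ => (0:ℝ)) atTop (𝓝 (c₄*p^2)) := hl.congr fun x => hF4 x
    have := tendsto_nhds_unique h0 tendsto_const_nhds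
    have hp2 : p^2 ≠ 0 := by positivity
    exact (mul_eq_zero.mp this).resolve_right hp2
  have hN : (2*r*c₄+c₅-c₁) - (c-b)*(c₃-r*c₆) = 0 := by
    have h0 : Real.exp ((c-b)*(0:ℝ)) = 1 := by norm_num
    have h2 : (p*(b-c))*((2*r*c₄+c₅-c₁) - (c-b)*(c₃-r*c₆)) = 0 := by
      linear_combination hF4 0 - (p*(b-c)*((2*r*c₄+c₅-c₁) - (c-b)*(c₃-r*c₆)))*h0 - p^2*hc4
    exact (mul_eq_zero.mp h2).resolve_left (mul_pos hp hbc').ne'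
  have hMC : c*(c₃-r*c₆) - (2*r*c₄+c₅-c₁) = 0 := by
    have h : p*c*(c*(c₃-r*c₆) - (2*r*c₄+c₅-c₁)) = 0 := by linear_combination hA0
    exact (mul_eq_zero.mp h).resolve_left (by positivity : (0:ℝ) < p*c).ne'
  have hC : (c₃-r*c₆) = 0 := by
    have h : b*(c₃-r*c₆) = 0 := by linear_combination hMC + hN
    exact (mul_eq_zero.mp h).resolve_left (ne_of_gt hb)
  have hc1 : c₁ = 0 := by
    have h := hD
    rw [hc4] at h
    linarith
  have hM0 : (2*r*c₄+c₅-c₁) = 0 := by linear_combination (-1)*hMC + c*hC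
  have hc5 : c₅ = 0 := by linear_combination hM0 - 2*r*hc4 + hc1
  have hc2 : c₂ = 0 := by linear_combination (-1)*hK + r^2*hc4 + r*hc5 - r*hc1
  exact ⟨hc1, hc2, hc4, hc5, by linarith [hC]⟩
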